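/- Let A be a finite p-algebra, let Cm(A) be its set of completely meet-irreducible congruences, ordered by μ ≤꜀ ν iff the ⊤-class of μ is contained in the ⊤-class of ν. For a ∈ A let M̂(a) = {μ ∈ Cm(A) : a μ ⊤}. Then: (1) each M̂(a) is an upper set of (Cm(A), ≤꜀); (2) the map a ↦ M̂(a) is a bijection from A onto the set of all upper sets of (Cm(A), ≤꜀); (3) M̂(a ⊓ b) = M̂(a) ∩ M̂(b), M̂(a ⊔ b) = M̂(a) ∪ M̂(b), M̂(⊥) = ∅, M̂(⊤) = Cm(A), and M̂(a*) = {μ ∈ Cm(A) : there is no ν ∈ M̂(a) with μ ≤꜀ ν}. In other words, A is isomorphic as a p-algebra to the p-algebra of upper sets of (Cm(A), ≤꜀). -/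

import Mathlib

variable {A : Type*}

/-- A congruence of a p-algebra `(A, ⊓, ⊔, *, ⊥, ⊤)`: an equivalence relation
compatible with meet, join and the pseudocomplementation `star`. -/
def IsPCong [Lattice A] (star : A → A) (θ : A → A → Prop) : Prop :=
  Equivalence θ ∧
  (∀ a b c d : A, θ a b → θ c d → θ (a ⊓ c) (b ⊓ d)) ∧
  (∀ a b c d : A, θ a b → θ c d → θ (a ⊔ c) (b ⊔ d)) ∧
  (∀ a b : A, θ a b → θ (star a) (star b))

/-- A completely meet-irreducible congruence: a congruence `μ` such that whenever `μ`
is the intersection of a (possibly empty) family of congruences, `μ` belongs to the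
family.  (Taking the empty family, such a `μ` is never the total relation.) -/
def IsCMI [Lattice A] (star : A → A) (μ : A → A → Prop) : Prop :=
  IsPCong star μ ∧
  ∀ S : Set (A → A → Prop), (∀ θ ∈ S, IsPCong star θ) →
    (μ = fun a b => ∀ θ ∈ S, θ a b) → μ ∈ S

/-- A relation has exactly two equivalence classes. -/
def HasTwoClasses (θ : A → A → Prop) : Prop :=
  ∃ a b : A, ¬ θ a b ∧ ∀ c : A, θ c a ∨ θ c b

/-- A prime filter of a lattice: proper, nonempty, upward closed, closed under `⊓`,
and `a ⊔ b ∈ F` implies `a ∈ F` or `b ∈ F`. -/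
def IsPrimeFilter [Lattice A] (F : Set A) : Prop :=
  F.Nonempty ∧ F ≠ Set.univ ∧ (∀ a b : A, a ∈ F → a ≤ b → b ∈ F) ∧
  (∀ a b : A, a ∈ F → b ∈ F → a ⊓ b ∈ F) ∧
  (∀ a b : A, a ⊔ b ∈ F → a ∈ F ∨ b ∈ F)

/-- `Mhat star a` is the set of completely meet-irreducible congruences relating `a`
to `⊤`. -/
def Mhat [Lattice A] [OrderTop A] (star : A → A) (a : A) : Set (A → A → Prop) :=
  {μ : A → A → Prop | IsCMI star μ ∧ μ a ⊤}

/-- The order `≤꜀` on completely meet-irreducible congruences: inclusion of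
`⊤`-classes. -/
def leC [Lattice A] [OrderTop A] (μ ν : A → A → Prop) : Prop :=
  {a : A | μ a ⊤} ⊆ {a : A | ν a ⊤}

/-- `U` is an upper set of `(Cm(A), ≤꜀)`. -/
def IsUpperCm [Lattice A] [OrderTop A] (star : A → A) (U : Set (A → A → Prop)) : Prop :=
  U ⊆ {μ : A → A → Prop | IsCMI star μ} ∧
  ∀ μ ∈ U, ∀ ν : A → A → Prop, IsCMI star ν → leC μ ν → ν ∈ U

section PAlgAux

variable [DistribLattice A] [BoundedOrder A] {star : A → A}

/-- Join-prime elements. -/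
def JPrime (p : A) : Prop :=
  p ≠ ⊥ ∧ ∀ x y : A, p ≤ x ⊔ y → p ≤ x ∨ p ≤ y

lemma star_inf_bot (hp : ∀ x y : A, x ⊓ y = ⊥ ↔ x ≤ star y) (a : A) :
    star a ⊓ a = ⊥ :=
  (hp _ _).mpr le_rfl

lemma star_key (hp : ∀ x y : A, x ⊓ y = ⊥ ↔ x ≤ star y) (x c : A) :
    star x ⊓ c = star (x ⊓ c) ⊓ c := by
  apply le_antisymm
  · refine le_inf ((hp _ _).mp ?_) inf_le_right
    calc (star x ⊓ c) ⊓ (x ⊓ c) = (star x ⊓ x) ⊓ (c ⊓ c) := by ac_rfl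
    _ = ⊥ := by rw [star_inf_bot hp, bot_inf_eq]
  · refine le_inf ((hp _ _).mp ?_) inf_le_right
    calc (star (x ⊓ c) ⊓ c) ⊓ x = star (x ⊓ c) ⊓ (x ⊓ c) := by ac_rfl
    _ = ⊥ := star_inf_bot hp _

lemma pc_top_up {θ : A → A → Prop} (h : IsPCong star θ) {x y : A}
    (hx : θ x ⊤) (hxy : x ≤ y) : θ y ⊤ := by
  have := h.2.2.1 x ⊤ y y hx (h.1.refl y)
  rwa [sup_eq_right.mpr hxy, top_sup_eq] at this

lemma pc_total {θ : A → A → Prop} (h : IsPCong star θ) (hbt : θ ⊥ ⊤) :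
    ∀ x y : A, θ x y := by
  have hx : ∀ x : A, θ x ⊤ := fun x => pc_top_up h hbt bot_le
  exact fun x y => h.1.trans (hx x) (h.1.symm (hx y))

/-- The relation `x ~ y ↔ μ (x ⊓ c) (y ⊓ c)`. -/
def relMeet (μ : A → A → Prop) (c : A) : A → A → Prop := fun x y => μ (x ⊓ c) (y ⊓ c)

lemma relMeet_pcong (hp : ∀ x y : A, x ⊓ y = ⊥ ↔ x ≤ star y)
    {μ : A → A → Prop} (h : IsPCong star μ) (c : A) :
    IsPCong star (relMeet μ c) := by
  refine ⟨⟨fun x => h.1.refl _, fun hxy => h.1.symm hxy,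
      fun h1 h2 => h.1.trans h1 h2⟩, ?_, ?_, ?_⟩
  · intro a b x y hab hxy
    have h2 := h.2.1 _ _ _ _ hab hxy
    show μ ((a ⊓ x) ⊓ c) ((b ⊓ y) ⊓ c)
    have e : ∀ u v : A, (u ⊓ c) ⊓ (v ⊓ c) = (u ⊓ v) ⊓ c := fun u v => by ac_rfl
    rwa [e, e] at h2
  · intro a b x y hab hxy
    have h2 := h.2.2.1 _ _ _ _ hab hxy
    show μ ((a ⊔ x) ⊓ c) ((b ⊔ y) ⊓ c)
    have e : ∀ u v : A, (u ⊓ c) ⊔ (v ⊓ c) = (u ⊔ v) ⊓ c := fun u v =>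
      (inf_sup_right u v c).symm
    rwa [e, e] at h2
  · intro a b hab
    have h1 := h.2.2.2 _ _ hab
    have h2 := h.2.1 _ _ _ _ h1 (h.1.refl c)
    show μ (star a ⊓ c) (star b ⊓ c)
    rw [star_key hp a c, star_key hp b c]
    exact h2

lemma cmi_not_total {μ : A → A → Prop} (h : IsCMI star μ) :
    ¬ ∀ x y : A, μ x y := by
  intro htot
  have heq : μ = fun a b => ∀ θ ∈ (∅ : Set (A → A → Prop)), θ a b := by
    funext a b
    exact propext ⟨fun _ => by simp, fun _ => htot a b⟩
  exact Set.notMem_empty μ (h.2 ∅ (fun θ hθ => absurd hθ (Set.notMem_empty θ)) heq)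

lemma cmi_prime (hp : ∀ x y : A, x ⊓ y = ⊥ ↔ x ≤ star y)
    {μ : A → A → Prop} (h : IsCMI star μ) {a b : A} (hab : μ (a ⊔ b) ⊤) :
    μ a ⊤ ∨ μ b ⊤ := by
  by_contra hc
  push_neg at hc
  have hpc := h.1
  have hmem : μ ∈ ({relMeet μ a, relMeet μ b} : Set (A → A → Prop)) := by
    apply h.2
    · intro θ hθ
      rcases hθ with rfl | rfl
      exacts [relMeet_pcong hp hpc a, relMeet_pcong hp hpc b]
    · funext x y
      apply propext
      constructor
      · intro hxy θ hθ
        rcases hθ with rfl | rfl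
        · exact hpc.2.1 _ _ _ _ hxy (hpc.1.refl a)
        · exact hpc.2.1 _ _ _ _ hxy (hpc.1.refl b)
      · intro H
        have h1 : μ (x ⊓ a) (y ⊓ a) := H _ (Or.inl rfl)
        have h2 : μ (x ⊓ b) (y ⊓ b) := H _ (Or.inr rfl)
        have h3 := hpc.2.2.1 _ _ _ _ h1 h2
        rw [← inf_sup_left, ← inf_sup_left] at h3
        have h4 : μ x (x ⊓ (a ⊔ b)) := by
          have := hpc.2.1 x x _ _ (hpc.1.refl x) (hpc.1.symm hab)
          rwa [inf_top_eq] at this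
        have h5 : μ y (y ⊓ (a ⊔ b)) := by
          have := hpc.2.1 y y _ _ (hpc.1.refl y) (hpc.1.symm hab)
          rwa [inf_top_eq] at this
        exact hpc.1.trans (hpc.1.trans h4 h3) (hpc.1.symm h5)
  have haux : ∀ c : A, μ = relMeet μ c → μ c ⊤ := by
    intro c hc'
    rw [hc']
    show μ (c ⊓ c) (⊤ ⊓ c)
    rw [inf_idem, top_inf_eq]
    exact hpc.1.refl c
  rcases hmem with heq | heq
  · exact hc.1 (haux a heq)
  · exact hc.2 (haux b heq)

lemma cmi_topclass [Finite A] (hp : ∀ x y : A, x ⊓ y = ⊥ ↔ x ≤ star y)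
    {μ : A → A → Prop} (h : IsCMI star μ) :
    ∃ q : A, JPrime q ∧ ∀ x : A, μ x ⊤ ↔ q ≤ x := by
  classical
  have hpc := h.1
  set s : Finset A := (Set.toFinite {x : A | μ x ⊤}).toFinset with hs
  have hmem : ∀ x : A, x ∈ s ↔ μ x ⊤ := fun x => Set.Finite.mem_toFinset _
  have hinf : ∀ t : Finset A, (∀ x ∈ t, μ x ⊤) → μ (t.inf id) ⊤ := by
    intro t
    induction t using Finset.induction_on with
    | empty => intro _; rw [Finset.inf_empty]; exact hpc.1.refl ⊤
    | insert _ _ hx ih =>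
      intro hall
      rw [Finset.inf_insert]
      have h1 := hall _ (Finset.mem_insert_self _ _)
      have h2 := ih fun x hx => hall x (Finset.mem_insert_of_mem hx)
      have := hpc.2.1 _ _ _ _ h1 h2
      rwa [inf_top_eq] at this
  set q : A := s.inf id with hq
  have hqT : μ q ⊤ := hinf s fun x hx => (hmem x).mp hx
  have hiff : ∀ x : A, μ x ⊤ ↔ q ≤ x := by
    intro x
    constructor
    · intro hx
      exact Finset.inf_le ((hmem x).mpr hx)
    · intro hx
      exact pc_top_up hpc hqT hx
  refine ⟨q, ⟨?_, ?_⟩, hiff⟩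
  · intro hq0
    rw [hq0] at hqT
    exact cmi_not_total h (pc_total hpc hqT)
  · intro x y hxy
    have : μ (x ⊔ y) ⊤ := (hiff _).mpr hxy
    rcases cmi_prime hp h this with h1 | h1
    · exact Or.inl ((hiff x).mp h1)
    · exact Or.inr ((hiff y).mp h1)

lemma exists_jp [Finite A] {a b : A} (hab : ¬ a ≤ b) :
    ∃ p : A, JPrime p ∧ p ≤ a ∧ ¬ p ≤ b := by
  obtain ⟨p, hpmem, hmin⟩ := Set.Finite.exists_minimalFor id
    {q : A | q ≤ a ∧ ¬ q ≤ b} (Set.toFinite _) ⟨a, le_rfl, hab⟩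
  refine ⟨p, ⟨?_, ?_⟩, hpmem.1, hpmem.2⟩
  · rintro rfl
    exact hpmem.2 bot_le
  · intro x y hxy
    by_contra hcon
    push_neg at hcon
    have key : ∀ z : A, ¬ p ≤ z → p ⊓ z ≤ b := by
      intro z hz
      by_contra hnz
      have h3 := hmin (j := p ⊓ z) ⟨inf_le_left.trans hpmem.1, hnz⟩ inf_le_left
      simp only [id] at h3
      exact hz (h3.trans inf_le_right)
    have h1 := key x hcon.1
    have h2 := key y hcon.2
    have : p ≤ b := by
      have : p = (p ⊓ x) ⊔ (p ⊓ y) := by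
        rw [← inf_sup_left, inf_eq_left.mpr hxy]
      rw [this]
      exact sup_le h1 h2
    exact hpmem.2 this

lemma jp_le_sup {q : A} (hq : JPrime q) :
    ∀ s : Finset A, q ≤ s.sup id → ∃ p ∈ s, q ≤ p := by
  classical
  intro s
  induction s using Finset.induction_on with
  | empty =>
    intro h
    rw [Finset.sup_empty] at h
    exact absurd (le_bot_iff.mp h) hq.1
  | insert x t hx ih =>
    intro h
    rw [Finset.sup_insert] at h
    rcases hq.2 _ _ h with h1 | h1
    · exact ⟨x, Finset.mem_insert_self _ _, h1⟩
    · obtain ⟨p, hp, h2⟩ := ih h1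
      exact ⟨p, Finset.mem_insert_of_mem hp, h2⟩

lemma exists_cmi_of_jp [Finite A] (hp : ∀ x y : A, x ⊓ y = ⊥ ↔ x ≤ star y)
    {q : A} (hq : JPrime q) :
    ∃ μ : A → A → Prop, IsCMI star μ ∧ ∀ x : A, μ x ⊤ ↔ q ≤ x := by
  classical
  set f : (A → A → Prop) → Set (A × A) := fun θ => {pr : A × A | θ pr.1 pr.2} with hf
  set 𝒮 : Set (A → A → Prop) :=
    {θ | IsPCong star θ ∧ ∀ x : A, θ x ⊤ ↔ q ≤ x} with h𝒮
  have hEq : IsPCong star (Eq : A → A → Prop) :=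
    ⟨eq_equivalence, fun a b c d h1 h2 => by rw [h1, h2],
      fun a b c d h1 h2 => by rw [h1, h2], fun a b h1 => by rw [h1]⟩
  have hne : 𝒮.Nonempty := by
    refine ⟨relMeet Eq q, relMeet_pcong hp hEq q, fun x => ?_⟩
    show x ⊓ q = ⊤ ⊓ q ↔ q ≤ x
    rw [top_inf_eq]
    exact inf_eq_right
  obtain ⟨μ, hμ𝒮, hmax⟩ := Set.Finite.exists_maximalFor f 𝒮 (Set.toFinite _) hne
  obtain ⟨hμpc, hμtop⟩ := hμ𝒮
  -- the "critical" element: join of everything not above q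
  set t : Finset A := (Set.toFinite {x : A | ¬ q ≤ x}).toFinset with ht
  set b : A := t.sup id with hb
  have hmemt : ∀ x : A, x ∈ t ↔ ¬ q ≤ x := fun x => Set.Finite.mem_toFinset _
  have hqb : ¬ q ≤ b := by
    intro hcon
    obtain ⟨p, hps, hqp⟩ := jp_le_sup hq t hcon
    exact (hmemt p).mp hps hqp
  have hleb : ∀ x : A, ¬ q ≤ x → x ≤ b :=
    fun x hx => Finset.le_sup (f := id) ((hmemt x).mpr hx)
  refine ⟨μ, ⟨hμpc, ?_⟩, hμtop⟩
  intro S hS hμeq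
  by_contra hμS
  have hsub : ∀ θ ∈ S, ∀ x y : A, μ x y → θ x y := by
    intro θ hθ x y hxy
    rw [hμeq] at hxy
    exact hxy θ hθ
  have hbT : ∀ θ ∈ S, θ b ⊤ := by
    intro θ hθ
    have hne' : μ ≠ θ := fun h => hμS (h ▸ hθ)
    by_cases htc : ∀ x : A, θ x ⊤ ↔ q ≤ x
    · exfalso
      have hfeq : f μ = f θ :=
        le_antisymm (show f μ ⊆ f θ from fun pr hpr => hsub θ hθ pr.1 pr.2 hpr)
            (hmax ⟨hS θ hθ, htc⟩ (show f μ ⊆ f θ from fun pr hpr => hsub θ hθ pr.1 pr.2 hpr))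
      have : μ = θ := by
        funext x y
        exact propext (Set.ext_iff.mp hfeq (x, y))
      exact hne' this
    · push_neg at htc
      obtain ⟨x, hx⟩ := htc
      rcases hx with ⟨hx1, hx2⟩ | ⟨hx1, hx2⟩
      · exact pc_top_up (hS θ hθ) hx1 (hleb x hx2)
      · exact absurd (hsub θ hθ _ _ ((hμtop x).mpr hx2)) hx1
  have : μ b ⊤ := by
    rw [hμeq]
    exact fun θ hθ => hbT θ hθ
  exact hqb ((hμtop b).mp this)

end PAlgAux

/-- A finite p-algebra `A` is isomorphic, via `a ↦ M̂(a)`, to the p-algebra of upper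
sets of its poset of completely meet-irreducible congruences ordered by `≤꜀`
(inclusion of `⊤`-classes). -/
theorem stmt11 [DistribLattice A] [BoundedOrder A] [Finite A] (star : A → A)
    (hp : ∀ x y : A, x ⊓ y = ⊥ ↔ x ≤ star y) :
    (∀ a : A, IsUpperCm star (Mhat star a)) ∧
    (∀ a b : A, Mhat star a = Mhat star b → a = b) ∧
    (∀ U : Set (A → A → Prop), IsUpperCm star U → ∃ a : A, Mhat star a = U) ∧
    (∀ a b : A, Mhat star (a ⊓ b) = Mhat star a ∩ Mhat star b) ∧
    (∀ a b : A, Mhat star (a ⊔ b) = Mhat star a ∪ Mhat star b) ∧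
    Mhat star (⊥ : A) = ∅ ∧
    Mhat star (⊤ : A) = {μ : A → A → Prop | IsCMI star μ} ∧
    (∀ a : A, Mhat star (star a) =
      {μ : A → A → Prop | IsCMI star μ ∧ ¬ ∃ ν ∈ Mhat star a, leC μ ν}) := by
  classical
  -- choose, for every join-prime `q`, a CMI congruence with ⊤-class `↑q`
  have keyμ : ∀ q : A, ∃ μ : A → A → Prop,
      JPrime q → (IsCMI star μ ∧ ∀ x : A, μ x ⊤ ↔ q ≤ x) := by
    intro q
    by_cases h : JPrime q
    · obtain ⟨μ, hμ⟩ := exists_cmi_of_jp hp h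
      exact ⟨μ, fun _ => hμ⟩
    · exact ⟨Eq, fun hh => absurd hh h⟩
  choose μof hμof using keyμ
  refine ⟨?_, ?_, ?_, ?_, ?_, ?_, ?_, ?_⟩
  · -- (1) upper sets
    intro a
    exact ⟨fun μ hμ => hμ.1, fun μ hμ ν hν hle => ⟨hν, hle hμ.2⟩⟩
  · -- (2) injectivity
    intro a b hab
    have key : ∀ u v : A, Mhat star u = Mhat star v → u ≤ v := by
      intro u v huv
      by_contra hle
      obtain ⟨p, hpjp, hpu, hpv⟩ := exists_jp hle
      have h1 : μof p ∈ Mhat star u :=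
        ⟨(hμof p hpjp).1, ((hμof p hpjp).2 u).mpr hpu⟩
      rw [huv] at h1
      exact hpv (((hμof p hpjp).2 v).mp h1.2)
    exact le_antisymm (key a b hab) (key b a hab.symm)
  · -- (3) surjectivity
    intro U hU
    set P : Finset A :=
      (Set.toFinite {p : A | JPrime p ∧ μof p ∈ U}).toFinset with hP
    have hmemP : ∀ p : A, p ∈ P ↔ JPrime p ∧ μof p ∈ U :=
      fun p => Set.Finite.mem_toFinset _
    refine ⟨P.sup id, ?_⟩
    ext μ
    constructor
    · rintro ⟨hcmi, htop⟩
      obtain ⟨qμ, hqjp, hqiff⟩ := cmi_topclass hp hcmi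
      obtain ⟨p, hpP, hqp⟩ := jp_le_sup hqjp P ((hqiff _).mp htop)
      obtain ⟨hpjp, hpU⟩ := (hmemP p).mp hpP
      refine hU.2 (μof p) hpU μ hcmi ?_
      intro x hx
      exact (hqiff x).mpr (hqp.trans (((hμof p hpjp).2 x).mp hx))
    · intro hμU
      have hcmi : IsCMI star μ := hU.1 hμU
      obtain ⟨qμ, hqjp, hqiff⟩ := cmi_topclass hp hcmi
      have h1 : μof qμ ∈ U := by
        refine hU.2 μ hμU (μof qμ) (hμof qμ hqjp).1 ?_
        intro x hx
        exact ((hμof qμ hqjp).2 x).mpr ((hqiff x).mp hx)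
      have hqP : qμ ∈ P := (hmemP qμ).mpr ⟨hqjp, h1⟩
      exact ⟨hcmi, (hqiff _).mpr (Finset.le_sup (f := id) hqP)⟩
  · -- (4) meet
    intro a b
    ext μ
    constructor
    · rintro ⟨hcmi, htop⟩
      exact ⟨⟨hcmi, pc_top_up hcmi.1 htop inf_le_left⟩,
        ⟨hcmi, pc_top_up hcmi.1 htop inf_le_right⟩⟩
    · rintro ⟨⟨hcmi, h1⟩, ⟨_, h2⟩⟩
      refine ⟨hcmi, ?_⟩
      have := hcmi.1.2.1 _ _ _ _ h1 h2
      rwa [top_inf_eq] at this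
  · -- (5) join
    intro a b
    ext μ
    constructor
    · rintro ⟨hcmi, htop⟩
      rcases cmi_prime hp hcmi htop with h1 | h1
      · exact Or.inl ⟨hcmi, h1⟩
      · exact Or.inr ⟨hcmi, h1⟩
    · rintro (⟨hcmi, h1⟩ | ⟨hcmi, h1⟩)
      · exact ⟨hcmi, pc_top_up hcmi.1 h1 le_sup_left⟩
      · exact ⟨hcmi, pc_top_up hcmi.1 h1 le_sup_right⟩
  · -- (6) bottom
    ext μ
    simp only [Set.mem_empty_iff_false, iff_false]
    rintro ⟨hcmi, htop⟩
    exact cmi_not_total hcmi (pc_total hcmi.1 htop)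
  · -- (7) top
    ext μ
    exact ⟨fun h => h.1, fun h => ⟨h, h.1.1.refl ⊤⟩⟩
  · -- (8) star
    intro a
    ext μ
    constructor
    · rintro ⟨hcmi, htop⟩
      refine ⟨hcmi, ?_⟩
      rintro ⟨ν, ⟨hνcmi, hνa⟩, hle⟩
      have hνstar : ν (star a) ⊤ := hle htop
      have hbot : ν (a ⊓ star a) ⊤ := by
        have := hνcmi.1.2.1 _ _ _ _ hνa hνstar
        rwa [top_inf_eq] at this
      rw [inf_comm, star_inf_bot hp] at hbot
      exact cmi_not_total hνcmi (pc_total hνcmi.1 hbot)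
    · rintro ⟨hcmi, hnex⟩
      obtain ⟨q, hqjp, hqiff⟩ := cmi_topclass hp hcmi
      refine ⟨hcmi, (hqiff _).mpr ((hp q a).mp ?_)⟩
      by_contra hne
      have hnle : ¬ q ⊓ a ≤ ⊥ := fun h => hne (le_bot_iff.mp h)
      obtain ⟨r, hrjp, hrle, _⟩ := exists_jp hnle
      refine hnex ⟨μof r, ⟨(hμof r hrjp).1,
        ((hμof r hrjp).2 a).mpr (hrle.trans inf_le_right)⟩, ?_⟩
      intro x hx
      exact ((hμof r hrjp).2 x).mpr ((hrle.trans inf_le_left).trans ((hqiff x).mp hx))
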